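/- arXiv:1007.4678 — 3 statements merged into one kernel-verified Lean document; each statement's English description precedes it below -/
import Mathlib

section
/- The coaction ρ : F → F ⊗ H defined on generators by ρ(λ_j) = Σ_n λ_j λ^n ⊗ p_n(Y_{v_j}) (j = 1,...,5) and ρ(φ_i) = Σ_n φ_i λ^n ⊗ p_n(√(G^{e_i})) (i = 1,2,3), extended as an algebra homomorphism, makes F a comodule algebra over H: (ρ ⊗ id)∘ρ = (id ⊗ Δ)∘ρ and (id ⊗ ε)∘ρ = id. -/
open scoped TensorProduct
noncomputable section

abbrev Md5 := Fin 5 →₀ ℕ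

/-- The QCD renormalization Hopf algebra `H`: free commutative ℂ-algebra on the symbols
`pₙ(Y_{v_j})` (`j = 1,…,5`) and `pₙ(√G^{e_i})` (`i = 1,2,3`), `n ∈ ℕ⁵ \ {0}`. -/
abbrev BH := MvPolynomial ((Fin 5 ⊕ Fin 3) × {n : Md5 // n ≠ 0}) ℂ

def PgenH (r : Fin 5 ⊕ Fin 3) (n : Md5) : BH :=
  if h : n = 0 then 1 else MvPolynomial.X (r, ⟨n, h⟩)

/-- The series `Y_{v_j} = Σ_n pₙ(Y_{v_j})`. -/
def Yg (j : Fin 5) : MvPowerSeries (Fin 5) BH := fun n => PgenH (Sum.inl j) n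

/-- The series `√G^{e_i} = Σ_n pₙ(√G^{e_i})`. -/
def Gg (i : Fin 3) : MvPowerSeries (Fin 5) BH := fun n => PgenH (Sum.inr i) n

def serOf (r : Fin 5 ⊕ Fin 3) : MvPowerSeries (Fin 5) BH :=
  match r with | Sum.inl j => Yg j | Sum.inr i => Gg i

/-- The coproduct: `Δ(Y_{v_j}) = Σ_n Y_{v_j} Y^n ⊗ pₙ(Y_{v_j})` and
`Δ(√G^{e_i}) = Σ_n √G^{e_i}·Y^n ⊗ pₙ(√G^{e_i})`, componentwise on generators. -/
def ΔH : BH →ₐ[ℂ] BH ⊗[ℂ] BH :=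
  MvPolynomial.aeval (fun p : (Fin 5 ⊕ Fin 3) × {n : Md5 // n ≠ 0} =>
    ∑ ab ∈ Finset.HasAntidiagonal.antidiagonal (p.2 : Md5),
      (MvPowerSeries.coeff ab.1 (serOf p.1 * ∏ j, (Yg j) ^ ((ab.2 : Md5) j))) ⊗ₜ[ℂ]
        PgenH p.1 ab.2)

/-- The counit. -/
def εH : BH →ₐ[ℂ] ℂ := MvPolynomial.aeval (fun _ => (0 : ℂ))

/-- `F = ℂ[[λ₁,…,λ₅]] ⊗ ℂ[φ₁,φ₂,φ₃]`, realized as power series in `λ` with polynomial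
coefficients in the field symbols `φ`. -/
abbrev FF := MvPowerSeries (Fin 5) (MvPolynomial (Fin 3) ℂ)

/-- The completed tensor product `F ⊗̂ H`. -/
abbrev TT := MvPowerSeries (Fin 5) (MvPolynomial (Fin 3) BH)

/-- The completed tensor product `F ⊗̂ H ⊗̂ H`. -/
abbrev TT2 := MvPowerSeries (Fin 5) (MvPolynomial (Fin 3) (BH ⊗[ℂ] BH))

/-- The product series `Y₁^(a₁)···Y₅^(a₅)·(√G¹)^(d₁)···(√G³)^(d₃)`. -/
def prodSer (a : Md5) (d : Fin 3 →₀ ℕ) : MvPowerSeries (Fin 5) BH :=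
  (∏ j, (Yg j) ^ (a j)) * ∏ i, (Gg i) ^ (d i)

/-- The coaction `ρ : F → F ⊗̂ H`, `ρ(λ^a φ^d) = Σ_n λ^(a+n) φ^d ⊗ pₙ(Y^a (√G)^d)`. -/
def ρH (S : FF) : TT :=
  fun m => ∑ an ∈ Finset.HasAntidiagonal.antidiagonal m,
    ∑ d ∈ (S an.1).support,
      MvPolynomial.coeff d (S an.1) •
        (MvPolynomial.monomial d (MvPowerSeries.coeff an.2 (prodSer an.1 d)))

/-- `ρ ⊗ id : F ⊗̂ H → F ⊗̂ H ⊗̂ H`. -/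
def ρhat (S : TT) : TT2 :=
  fun m => ∑ an ∈ Finset.HasAntidiagonal.antidiagonal m,
    ∑ d ∈ (S an.1).support,
      MvPolynomial.monomial d
        ((MvPowerSeries.coeff an.2 (prodSer an.1 d)) ⊗ₜ[ℂ] MvPolynomial.coeff d (S an.1))

/-- `id ⊗ Δ : F ⊗̂ H → F ⊗̂ H ⊗̂ H`. -/
def idΔ : TT →+* TT2 :=
  MvPowerSeries.map (MvPolynomial.map ΔH.toRingHom)

/-- `id ⊗ ε : F ⊗̂ H → F`. -/
def idε : TT →+* FF :=
  MvPowerSeries.map (MvPolynomial.map εH.toRingHom)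

section AuxCombinatorics

open Finset

variable {M : Type*} [AddCommMonoid M]

lemma aux_sum_swap (k : Md5) (t : Md5 → Md5 → M) :
    ∑ q ∈ antidiagonal k, t q.1 q.2 = ∑ q ∈ antidiagonal k, t q.2 q.1 := by
  conv_lhs => rw [← Finset.HasAntidiagonal.map_swap_antidiagonal]
  rw [Finset.sum_map]
  rfl

lemma aux_assoc (m : Md5) (f : Md5 → Md5 → Md5 → M) :
    ∑ p ∈ antidiagonal m, ∑ q ∈ antidiagonal p.1, f q.1 q.2 p.2
      = ∑ p ∈ antidiagonal m, ∑ q ∈ antidiagonal p.2, f p.1 q.1 q.2 := by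
  rw [Finset.sum_sigma', Finset.sum_sigma']
  refine Finset.sum_nbij' (fun x => ⟨(x.2.1, x.2.2 + x.1.2), (x.2.2, x.1.2)⟩)
    (fun x => ⟨(x.1.1 + x.2.1, x.2.2), (x.1.1, x.2.1)⟩) ?_ ?_ ?_ ?_ ?_
  · rintro ⟨⟨u, c⟩, ⟨a, b⟩⟩ h
    simp only [mem_sigma, Finset.HasAntidiagonal.mem_antidiagonal] at h ⊢
    obtain ⟨h1, h2⟩ := h
    subst h2
    exact ⟨by rw [← add_assoc]; exact h1, trivial⟩
  · rintro ⟨⟨a, t⟩, ⟨b, c⟩⟩ h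
    simp only [mem_sigma, Finset.HasAntidiagonal.mem_antidiagonal] at h ⊢
    obtain ⟨h1, h2⟩ := h
    subst h2
    exact ⟨by rw [add_assoc]; exact h1, trivial⟩
  · rintro ⟨⟨u, c⟩, ⟨a, b⟩⟩ h
    simp only [mem_sigma, Finset.HasAntidiagonal.mem_antidiagonal] at h
    obtain ⟨h1, h2⟩ := h
    subst h2
    rfl
  · rintro ⟨⟨a, t⟩, ⟨b, c⟩⟩ h
    simp only [mem_sigma, Finset.HasAntidiagonal.mem_antidiagonal] at h
    obtain ⟨h1, h2⟩ := h
    subst h2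
    rfl
  · rintro ⟨⟨u, c⟩, ⟨a, b⟩⟩ h
    rfl

lemma aux_interchange (m : Md5) (f : Md5 → Md5 → Md5 → Md5 → M) :
    ∑ p ∈ antidiagonal m, ∑ q ∈ antidiagonal p.1, ∑ r ∈ antidiagonal p.2,
        f q.1 q.2 r.1 r.2
      = ∑ p ∈ antidiagonal m, ∑ q ∈ antidiagonal p.1, ∑ r ∈ antidiagonal p.2,
          f q.1 r.1 q.2 r.2 := by
  have h : ∀ g : Md5 → Md5 → Md5 → Md5 → M,
      (∑ p ∈ antidiagonal m, ∑ q ∈ antidiagonal p.1, ∑ r ∈ antidiagonal p.2,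
          g q.1 q.2 r.1 r.2)
        = ∑ x ∈ (antidiagonal m).sigma
            (fun p : Md5 × Md5 => antidiagonal p.1 ×ˢ antidiagonal p.2),
            g x.2.1.1 x.2.1.2 x.2.2.1 x.2.2.2 := by
    intro g
    rw [Finset.sum_sigma]
    exact Finset.sum_congr rfl fun p _ =>
      (Finset.sum_product (antidiagonal p.1) (antidiagonal p.2)
        (fun x => g x.1.1 x.1.2 x.2.1 x.2.2)).symm
  rw [h (fun a b c d => f a b c d), h (fun a b c d => f a c b d)]
  refine Finset.sum_nbij'
    (fun x => ⟨(x.2.1.1 + x.2.2.1, x.2.1.2 + x.2.2.2), ((x.2.1.1, x.2.2.1), (x.2.1.2, x.2.2.2))⟩)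
    (fun x => ⟨(x.2.1.1 + x.2.2.1, x.2.1.2 + x.2.2.2), ((x.2.1.1, x.2.2.1), (x.2.1.2, x.2.2.2))⟩)
    ?_ ?_ ?_ ?_ ?_
  · rintro ⟨⟨u, v⟩, ⟨⟨a, b⟩, ⟨c, d⟩⟩⟩ h
    simp only [mem_sigma, Finset.HasAntidiagonal.mem_antidiagonal, mem_product] at h ⊢
    obtain ⟨h1, h2, h3⟩ := h
    subst h2; subst h3
    exact ⟨(add_add_add_comm a b c d).symm.trans h1, trivial, trivial⟩
  · rintro ⟨⟨u, v⟩, ⟨⟨a, b⟩, ⟨c, d⟩⟩⟩ h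
    simp only [mem_sigma, Finset.HasAntidiagonal.mem_antidiagonal, mem_product] at h ⊢
    obtain ⟨h1, h2, h3⟩ := h
    subst h2; subst h3
    exact ⟨(add_add_add_comm a b c d).symm.trans h1, trivial, trivial⟩
  · rintro ⟨⟨u, v⟩, ⟨⟨a, b⟩, ⟨c, d⟩⟩⟩ h
    simp only [mem_sigma, Finset.HasAntidiagonal.mem_antidiagonal, mem_product] at h
    obtain ⟨h1, h2, h3⟩ := h
    subst h2; subst h3
    rfl
  · rintro ⟨⟨u, v⟩, ⟨⟨a, b⟩, ⟨c, d⟩⟩⟩ h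
    simp only [mem_sigma, Finset.HasAntidiagonal.mem_antidiagonal, mem_product] at h
    obtain ⟨h1, h2, h3⟩ := h
    subst h2; subst h3
    rfl
  · rintro ⟨⟨u, v⟩, ⟨⟨a, b⟩, ⟨c, d⟩⟩⟩ h
    rfl

end AuxCombinatorics

section AuxSeries

open Finset

lemma Ypow_add (u v : Md5) :
    (∏ j, Yg j ^ ((u + v) j)) = (∏ j, Yg j ^ (u j)) * ∏ j, Yg j ^ (v j) := by
  rw [← Finset.prod_mul_distrib]
  exact Finset.prod_congr rfl fun j _ => by rw [Finsupp.add_apply, pow_add]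

lemma Gpow_add (u v : Fin 3 →₀ ℕ) :
    (∏ i, Gg i ^ ((u + v) i)) = (∏ i, Gg i ^ (u i)) * ∏ i, Gg i ^ (v i) := by
  rw [← Finset.prod_mul_distrib]
  exact Finset.prod_congr rfl fun i _ => by rw [Finsupp.add_apply, pow_add]

lemma prodSer_add (a a' : Md5) (d d' : Fin 3 →₀ ℕ) :
    prodSer (a + a') (d + d') = prodSer a d * prodSer a' d' := by
  unfold prodSer
  rw [Ypow_add, Gpow_add]
  ring

lemma prodSer_add_left (b k : Md5) (d : Fin 3 →₀ ℕ) :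
    prodSer (b + k) d = prodSer b d * ∏ j, Yg j ^ (k j) := by
  unfold prodSer
  rw [Ypow_add]
  ring

lemma prodSer_zero : prodSer 0 0 = 1 := by
  unfold prodSer
  simp

lemma coeff_rhoH (S : FF) (m : Md5) (d : Fin 3 →₀ ℕ) :
    MvPolynomial.coeff d ((ρH S) m)
      = ∑ an ∈ antidiagonal m,
          MvPolynomial.coeff d (S an.1) • MvPowerSeries.coeff an.2 (prodSer an.1 d) := by
  simp only [ρH]
  rw [MvPolynomial.coeff_sum]
  refine Finset.sum_congr rfl fun an _ => ?_
  rw [MvPolynomial.coeff_sum]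
  have hterm : ∀ d' ∈ (S an.1).support,
      MvPolynomial.coeff d (MvPolynomial.coeff d' (S an.1) •
        (MvPolynomial.monomial d' (MvPowerSeries.coeff an.2 (prodSer an.1 d'))))
        = if d' = d then
            MvPolynomial.coeff d' (S an.1) • MvPowerSeries.coeff an.2 (prodSer an.1 d')
          else 0 := by
    intro d' _
    rw [MvPolynomial.coeff_smul, MvPolynomial.coeff_monomial]
    split <;> simp
  rw [Finset.sum_congr rfl hterm, Finset.sum_ite_eq']
  split
  · rfl
  · next h => rw [MvPolynomial.notMem_support_iff.mp h, zero_smul]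

lemma coeff_rhohat (T : TT) (m : Md5) (d : Fin 3 →₀ ℕ) :
    MvPolynomial.coeff d ((ρhat T) m)
      = ∑ an ∈ antidiagonal m,
          (MvPowerSeries.coeff an.2 (prodSer an.1 d)) ⊗ₜ[ℂ]
            MvPolynomial.coeff d (T an.1) := by
  simp only [ρhat]
  rw [MvPolynomial.coeff_sum]
  refine Finset.sum_congr rfl fun an _ => ?_
  rw [MvPolynomial.coeff_sum]
  rw [Finset.sum_congr rfl (fun d' (_ : d' ∈ (T an.1).support) =>
    MvPolynomial.coeff_monomial d d' _)]
  rw [Finset.sum_ite_eq']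
  split
  · rfl
  · next h => rw [MvPolynomial.notMem_support_iff.mp h, TensorProduct.tmul_zero]

lemma coeff_coeff_mul {R : Type*} [CommSemiring R]
    (A B : MvPowerSeries (Fin 5) (MvPolynomial (Fin 3) R)) (m : Md5) (d : Fin 3 →₀ ℕ) :
    MvPolynomial.coeff d ((A * B) m)
      = ∑ p ∈ antidiagonal m, ∑ q ∈ antidiagonal d,
          MvPolynomial.coeff q.1 (A p.1) * MvPolynomial.coeff q.2 (B p.2) := by
  have h : (A * B) m = MvPowerSeries.coeff m (A * B) := rfl
  rw [h, MvPowerSeries.coeff_mul, MvPolynomial.coeff_sum]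
  exact Finset.sum_congr rfl fun p _ => MvPolynomial.coeff_mul _ _ _

lemma serOf_coeff (r : Fin 5 ⊕ Fin 3) (k : Md5) :
    MvPowerSeries.coeff k (serOf r) = PgenH r k := by
  cases r <;> rfl

/-- The set of series `F` whose coefficients satisfy the "grouplike-type" coproduct
formula `Δ(coeff k F) = Σ_{n+l=k} coeff n (F·Y^l) ⊗ coeff l F`. -/
def DeltaGood : Submonoid (MvPowerSeries (Fin 5) BH) where
  carrier := {F | ∀ k : Md5,
    ΔH (MvPowerSeries.coeff k F)
      = ∑ p ∈ antidiagonal k,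
          (MvPowerSeries.coeff p.1 (F * ∏ j, Yg j ^ (p.2 j))) ⊗ₜ[ℂ]
            MvPowerSeries.coeff p.2 F}
  one_mem' := by
    intro k
    rw [Finset.sum_eq_single (k, 0)]
    · have h0 : (∏ j, Yg j ^ (((k, (0 : Md5)).2) j)) = 1 := by simp
      rw [h0, mul_one]
      by_cases hk : k = 0
      · subst hk
        simp [MvPowerSeries.coeff_one, Algebra.TensorProduct.one_def]
      · simp [MvPowerSeries.coeff_one, hk]
    · intro p hp hne
      rw [Finset.HasAntidiagonal.mem_antidiagonal] at hp
      have h2 : p.2 ≠ 0 := by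
        intro h
        apply hne
        have : p.1 = k := by rw [← hp, h, add_zero]
        exact Prod.ext this h
      rw [show MvPowerSeries.coeff p.2 (1 : MvPowerSeries (Fin 5) BH) = 0 from
        by rw [MvPowerSeries.coeff_one, if_neg h2]]
      rw [TensorProduct.tmul_zero]
    · intro h
      exact absurd (by rw [Finset.HasAntidiagonal.mem_antidiagonal, add_zero]) h
  mul_mem' := by
    intro F G hF hG k
    have key : ∑ p ∈ antidiagonal k, ∑ q ∈ antidiagonal p.1, ∑ r ∈ antidiagonal p.2,
        (MvPowerSeries.coeff q.1 (F * ∏ j, Yg j ^ (q.2 j)) *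
          MvPowerSeries.coeff r.1 (G * ∏ j, Yg j ^ (r.2 j))) ⊗ₜ[ℂ]
          (MvPowerSeries.coeff q.2 F * MvPowerSeries.coeff r.2 G)
        = ∑ p ∈ antidiagonal k, ∑ q ∈ antidiagonal p.1, ∑ r ∈ antidiagonal p.2,
        (MvPowerSeries.coeff q.1 (F * ∏ j, Yg j ^ (r.1 j)) *
          MvPowerSeries.coeff q.2 (G * ∏ j, Yg j ^ (r.2 j))) ⊗ₜ[ℂ]
          (MvPowerSeries.coeff r.1 F * MvPowerSeries.coeff r.2 G) :=
      aux_interchange k (fun a b c d =>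
        (MvPowerSeries.coeff a (F * ∏ j, Yg j ^ (b j)) *
          MvPowerSeries.coeff c (G * ∏ j, Yg j ^ (d j))) ⊗ₜ[ℂ]
          (MvPowerSeries.coeff b F * MvPowerSeries.coeff d G))
    calc ΔH (MvPowerSeries.coeff k (F * G))
        = ∑ p ∈ antidiagonal k, ΔH (MvPowerSeries.coeff p.1 F) *
            ΔH (MvPowerSeries.coeff p.2 G) := by
          rw [MvPowerSeries.coeff_mul, map_sum]
          exact Finset.sum_congr rfl fun p _ => map_mul _ _ _
      _ = ∑ p ∈ antidiagonal k, ∑ q ∈ antidiagonal p.1, ∑ r ∈ antidiagonal p.2,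
            (MvPowerSeries.coeff q.1 (F * ∏ j, Yg j ^ (q.2 j)) *
              MvPowerSeries.coeff r.1 (G * ∏ j, Yg j ^ (r.2 j))) ⊗ₜ[ℂ]
              (MvPowerSeries.coeff q.2 F * MvPowerSeries.coeff r.2 G) := by
          refine Finset.sum_congr rfl fun p _ => ?_
          rw [hF p.1, hG p.2, Finset.sum_mul_sum]
          exact Finset.sum_congr rfl fun q _ => Finset.sum_congr rfl fun r _ =>
            Algebra.TensorProduct.tmul_mul_tmul _ _ _ _
      _ = ∑ p ∈ antidiagonal k, ∑ q ∈ antidiagonal p.1, ∑ r ∈ antidiagonal p.2,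
            (MvPowerSeries.coeff q.1 (F * ∏ j, Yg j ^ (r.1 j)) *
              MvPowerSeries.coeff q.2 (G * ∏ j, Yg j ^ (r.2 j))) ⊗ₜ[ℂ]
              (MvPowerSeries.coeff r.1 F * MvPowerSeries.coeff r.2 G) := key
      _ = ∑ p ∈ antidiagonal k,
            (MvPowerSeries.coeff p.1 (F * G * ∏ j, Yg j ^ (p.2 j))) ⊗ₜ[ℂ]
              MvPowerSeries.coeff p.2 (F * G) := by
          refine Finset.sum_congr rfl fun p _ => ?_
          rw [MvPowerSeries.coeff_mul (n := p.2), TensorProduct.tmul_sum, Finset.sum_comm]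
          refine Finset.sum_congr rfl fun r hr => ?_
          rw [Finset.HasAntidiagonal.mem_antidiagonal] at hr
          have hY : (F * G * ∏ j, Yg j ^ (p.2 j))
              = (F * ∏ j, Yg j ^ (r.1 j)) * (G * ∏ j, Yg j ^ (r.2 j)) := by
            rw [← hr, Ypow_add]
            ring
          rw [hY, MvPowerSeries.coeff_mul (n := p.1), TensorProduct.sum_tmul]

lemma serOf_mem_DeltaGood (r : Fin 5 ⊕ Fin 3) : serOf r ∈ DeltaGood := by
  intro k
  rw [serOf_coeff]
  unfold PgenH
  split
  · next h =>
    subst h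
    rw [map_one, Finset.HasAntidiagonal.antidiagonal_zero, Finset.sum_singleton]
    have h0 : (∏ j, Yg j ^ (((0 : Md5), (0 : Md5)).2 j)) = (1 : MvPowerSeries (Fin 5) BH) := by
      simp
    rw [h0, mul_one, serOf_coeff]
    rw [show PgenH r ((0 : Md5), (0 : Md5)).2 = 1 from by unfold PgenH; simp]
    rw [Algebra.TensorProduct.one_def]
  · next h =>
    simp only [ΔH, MvPolynomial.aeval_X]
    exact Finset.sum_congr rfl fun p _ => by rw [serOf_coeff]

lemma prodSer_mem_DeltaGood (a : Md5) (d : Fin 3 →₀ ℕ) : prodSer a d ∈ DeltaGood :=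
  mul_mem
    (prod_mem fun j _ => pow_mem (serOf_mem_DeltaGood (Sum.inl j)) _)
    (prod_mem fun i _ => pow_mem (serOf_mem_DeltaGood (Sum.inr i)) _)

lemma delta_coeff_prodSer (a : Md5) (d : Fin 3 →₀ ℕ) (k : Md5) :
    ΔH (MvPowerSeries.coeff k (prodSer a d))
      = ∑ p ∈ antidiagonal k,
          (MvPowerSeries.coeff p.1 (prodSer a d * ∏ j, Yg j ^ (p.2 j))) ⊗ₜ[ℂ]
            MvPowerSeries.coeff p.2 (prodSer a d) :=
  prodSer_mem_DeltaGood a d k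

lemma εH_PgenH (r : Fin 5 ⊕ Fin 3) (n : Md5) :
    εH (PgenH r n) = if n = 0 then 1 else 0 := by
  unfold PgenH
  split
  · next h => simp [h]
  · next h => simp [εH, h]

lemma εH_coeff_prodSer (a : Md5) (d : Fin 3 →₀ ℕ) (n : Md5) :
    εH (MvPowerSeries.coeff n (prodSer a d)) = if n = 0 then 1 else 0 := by
  have hgen : ∀ r : Fin 5 ⊕ Fin 3,
      MvPowerSeries.map εH.toRingHom (serOf r) = 1 := by
    intro r
    apply MvPowerSeries.ext
    intro k
    rw [MvPowerSeries.coeff_map, serOf_coeff, MvPowerSeries.coeff_one]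
    exact εH_PgenH r k
  have hmap : MvPowerSeries.map εH.toRingHom (prodSer a d) = 1 := by
    unfold prodSer
    rw [map_mul, map_prod, map_prod]
    have hY : ∀ j : Fin 5, (MvPowerSeries.map εH.toRingHom) (Yg j) = 1 :=
      fun j => hgen (Sum.inl j)
    have hG : ∀ i : Fin 3, (MvPowerSeries.map εH.toRingHom) (Gg i) = 1 :=
      fun i => hgen (Sum.inr i)
    have h1 : ∀ j : Fin 5,
        (MvPowerSeries.map εH.toRingHom) (Yg j ^ (a j)) = 1 := fun j => by
      rw [map_pow, hY j, one_pow]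
    have h2 : ∀ i : Fin 3,
        (MvPowerSeries.map εH.toRingHom) (Gg i ^ (d i)) = 1 := fun i => by
      rw [map_pow, hG i, one_pow]
    rw [Finset.prod_congr rfl (fun j _ => h1 j), Finset.prod_congr rfl (fun i _ => h2 i),
      Finset.prod_const_one, Finset.prod_const_one, one_mul]
  have : εH (MvPowerSeries.coeff n (prodSer a d))
      = MvPowerSeries.coeff n (MvPowerSeries.map εH.toRingHom (prodSer a d)) := by
    rw [MvPowerSeries.coeff_map]
    rfl
  rw [this, hmap, MvPowerSeries.coeff_one]

end AuxSeries

/-- the coaction `ρ : F → F ⊗ H` given on generators by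
`ρ(λ_j) = Σ_n λ_j λ^n ⊗ pₙ(Y_{v_j})` and `ρ(φ_i) = Σ_n φ_i λ^n ⊗ pₙ(√G^{e_i})`,
extended as an algebra homomorphism, makes `F` a comodule algebra over `H`:
`ρ` is an algebra map, `(ρ ⊗ id)∘ρ = (id ⊗ Δ)∘ρ` and `(id ⊗ ε)∘ρ = id`. -/
theorem coaction_comodule_algebra :
    (∀ S S' : FF, ρH (S * S') = ρH S * ρH S') ∧
    (ρH 1 = 1) ∧
    (∀ S : FF, ρhat (ρH S) = idΔ (ρH S)) ∧
    (∀ S : FF, idε (ρH S) = S) := by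
  refine ⟨?_, ?_, ?_, ?_⟩
  · -- multiplicativity
    intro S S'
    funext m
    apply MvPolynomial.ext
    intro d
    have hL : MvPolynomial.coeff d ((ρH (S * S')) m)
        = ∑ q ∈ Finset.HasAntidiagonal.antidiagonal d, ∑ p ∈ Finset.HasAntidiagonal.antidiagonal m,
            ∑ u ∈ Finset.HasAntidiagonal.antidiagonal p.1, ∑ v ∈ Finset.HasAntidiagonal.antidiagonal p.2,
            (MvPolynomial.coeff q.1 (S u.1) * MvPolynomial.coeff q.2 (S' v.1)) •
              (MvPowerSeries.coeff u.2 (prodSer u.1 q.1) *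
                MvPowerSeries.coeff v.2 (prodSer v.1 q.2)) := by
      calc MvPolynomial.coeff d ((ρH (S * S')) m)
          = ∑ an ∈ Finset.HasAntidiagonal.antidiagonal m,
              MvPolynomial.coeff d ((S * S') an.1) •
                MvPowerSeries.coeff an.2 (prodSer an.1 d) := coeff_rhoH _ m d
        _ = ∑ an ∈ Finset.HasAntidiagonal.antidiagonal m, ∑ p ∈ Finset.HasAntidiagonal.antidiagonal an.1,
              ∑ q ∈ Finset.HasAntidiagonal.antidiagonal d,
              (MvPolynomial.coeff q.1 (S p.1) * MvPolynomial.coeff q.2 (S' p.2)) •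
                MvPowerSeries.coeff an.2 (prodSer an.1 d) := by
            refine Finset.sum_congr rfl fun an _ => ?_
            rw [coeff_coeff_mul S S' an.1 d, Finset.sum_smul]
            exact Finset.sum_congr rfl fun p _ => Finset.sum_smul
        _ = ∑ an ∈ Finset.HasAntidiagonal.antidiagonal m, ∑ p ∈ Finset.HasAntidiagonal.antidiagonal an.1,
              ∑ q ∈ Finset.HasAntidiagonal.antidiagonal d, ∑ r ∈ Finset.HasAntidiagonal.antidiagonal an.2,
              (MvPolynomial.coeff q.1 (S p.1) * MvPolynomial.coeff q.2 (S' p.2)) •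
                (MvPowerSeries.coeff r.1 (prodSer p.1 q.1) *
                  MvPowerSeries.coeff r.2 (prodSer p.2 q.2)) := by
            refine Finset.sum_congr rfl fun an _ => Finset.sum_congr rfl fun p hp =>
              Finset.sum_congr rfl fun q hq => ?_
            rw [Finset.HasAntidiagonal.mem_antidiagonal] at hp hq
            rw [show prodSer an.1 d = prodSer p.1 q.1 * prodSer p.2 q.2 from by
              rw [← hp, ← hq, prodSer_add]]
            rw [MvPowerSeries.coeff_mul, Finset.smul_sum]
        _ = ∑ an ∈ Finset.HasAntidiagonal.antidiagonal m, ∑ q ∈ Finset.HasAntidiagonal.antidiagonal d,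
              ∑ p ∈ Finset.HasAntidiagonal.antidiagonal an.1, ∑ r ∈ Finset.HasAntidiagonal.antidiagonal an.2,
              (MvPolynomial.coeff q.1 (S p.1) * MvPolynomial.coeff q.2 (S' p.2)) •
                (MvPowerSeries.coeff r.1 (prodSer p.1 q.1) *
                  MvPowerSeries.coeff r.2 (prodSer p.2 q.2)) :=
            Finset.sum_congr rfl fun an _ => Finset.sum_comm
        _ = ∑ q ∈ Finset.HasAntidiagonal.antidiagonal d, ∑ an ∈ Finset.HasAntidiagonal.antidiagonal m,
              ∑ p ∈ Finset.HasAntidiagonal.antidiagonal an.1, ∑ r ∈ Finset.HasAntidiagonal.antidiagonal an.2,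
              (MvPolynomial.coeff q.1 (S p.1) * MvPolynomial.coeff q.2 (S' p.2)) •
                (MvPowerSeries.coeff r.1 (prodSer p.1 q.1) *
                  MvPowerSeries.coeff r.2 (prodSer p.2 q.2)) := Finset.sum_comm
        _ = ∑ q ∈ Finset.HasAntidiagonal.antidiagonal d, ∑ p ∈ Finset.HasAntidiagonal.antidiagonal m,
              ∑ u ∈ Finset.HasAntidiagonal.antidiagonal p.1, ∑ v ∈ Finset.HasAntidiagonal.antidiagonal p.2,
              (MvPolynomial.coeff q.1 (S u.1) * MvPolynomial.coeff q.2 (S' v.1)) •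
                (MvPowerSeries.coeff u.2 (prodSer u.1 q.1) *
                  MvPowerSeries.coeff v.2 (prodSer v.1 q.2)) :=
            Finset.sum_congr rfl fun q _ => aux_interchange m (fun a1 a2 n1 n2 =>
              (MvPolynomial.coeff q.1 (S a1) * MvPolynomial.coeff q.2 (S' a2)) •
                (MvPowerSeries.coeff n1 (prodSer a1 q.1) *
                  MvPowerSeries.coeff n2 (prodSer a2 q.2)))
    have hR : MvPolynomial.coeff d ((ρH S * ρH S') m)
        = ∑ q ∈ Finset.HasAntidiagonal.antidiagonal d, ∑ p ∈ Finset.HasAntidiagonal.antidiagonal m,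
            ∑ u ∈ Finset.HasAntidiagonal.antidiagonal p.1, ∑ v ∈ Finset.HasAntidiagonal.antidiagonal p.2,
            (MvPolynomial.coeff q.1 (S u.1) * MvPolynomial.coeff q.2 (S' v.1)) •
              (MvPowerSeries.coeff u.2 (prodSer u.1 q.1) *
                MvPowerSeries.coeff v.2 (prodSer v.1 q.2)) := by
      calc MvPolynomial.coeff d ((ρH S * ρH S') m)
          = ∑ p ∈ Finset.HasAntidiagonal.antidiagonal m, ∑ q ∈ Finset.HasAntidiagonal.antidiagonal d,
              MvPolynomial.coeff q.1 ((ρH S) p.1) *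
                MvPolynomial.coeff q.2 ((ρH S') p.2) := coeff_coeff_mul _ _ m d
        _ = ∑ p ∈ Finset.HasAntidiagonal.antidiagonal m, ∑ q ∈ Finset.HasAntidiagonal.antidiagonal d,
              ∑ u ∈ Finset.HasAntidiagonal.antidiagonal p.1, ∑ v ∈ Finset.HasAntidiagonal.antidiagonal p.2,
              (MvPolynomial.coeff q.1 (S u.1) * MvPolynomial.coeff q.2 (S' v.1)) •
                (MvPowerSeries.coeff u.2 (prodSer u.1 q.1) *
                  MvPowerSeries.coeff v.2 (prodSer v.1 q.2)) := by
            refine Finset.sum_congr rfl fun p _ => Finset.sum_congr rfl fun q _ => ?_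
            rw [coeff_rhoH S p.1 q.1, coeff_rhoH S' p.2 q.2, Finset.sum_mul_sum]
            exact Finset.sum_congr rfl fun u _ => Finset.sum_congr rfl fun v _ =>
              smul_mul_smul_comm _ _ _ _
        _ = ∑ q ∈ Finset.HasAntidiagonal.antidiagonal d, ∑ p ∈ Finset.HasAntidiagonal.antidiagonal m,
              ∑ u ∈ Finset.HasAntidiagonal.antidiagonal p.1, ∑ v ∈ Finset.HasAntidiagonal.antidiagonal p.2,
              (MvPolynomial.coeff q.1 (S u.1) * MvPolynomial.coeff q.2 (S' v.1)) •
                (MvPowerSeries.coeff u.2 (prodSer u.1 q.1) *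
                  MvPowerSeries.coeff v.2 (prodSer v.1 q.2)) := Finset.sum_comm
    rw [hL, hR]
  · -- unitality
    funext m
    apply MvPolynomial.ext
    intro d
    rw [coeff_rhoH]
    rw [Finset.sum_eq_single ((0 : Md5), m)]
    · show MvPolynomial.coeff d ((1 : FF) (0 : Md5)) •
          MvPowerSeries.coeff m (prodSer 0 d) = MvPolynomial.coeff d ((1 : TT) m)
      rw [show ((1 : FF) (0 : Md5)) = (1 : MvPolynomial (Fin 3) ℂ) from by
        rw [show ((1 : FF) (0 : Md5)) = MvPowerSeries.coeff 0 (1 : FF) from rfl,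
          MvPowerSeries.coeff_one, if_pos rfl]]
      rw [show ((1 : TT) m) = (if m = 0 then (1 : MvPolynomial (Fin 3) BH) else 0) from by
        rw [show ((1 : TT) m) = MvPowerSeries.coeff m (1 : TT) from rfl,
          MvPowerSeries.coeff_one]]
      by_cases hd : d = 0
      · subst hd
        rw [MvPolynomial.coeff_one, if_pos rfl, one_smul, prodSer_zero,
          MvPowerSeries.coeff_one]
        by_cases hm : m = 0
        · rw [if_pos hm, if_pos hm, MvPolynomial.coeff_one, if_pos rfl]
        · rw [if_neg hm, if_neg hm, MvPolynomial.coeff_zero]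
      · rw [MvPolynomial.coeff_one, if_neg (fun h => hd h.symm), zero_smul]
        by_cases hm : m = 0
        · rw [if_pos hm, MvPolynomial.coeff_one, if_neg (fun h => hd h.symm)]
        · rw [if_neg hm, MvPolynomial.coeff_zero]
    · intro an han hne
      rw [Finset.HasAntidiagonal.mem_antidiagonal] at han
      have h1 : an.1 ≠ 0 := by
        intro h
        apply hne
        have h2 : an.2 = m := by rw [← han, h, zero_add]
        exact Prod.ext h h2
      rw [show ((1 : FF) an.1) = (0 : MvPolynomial (Fin 3) ℂ) from by
        rw [show ((1 : FF) an.1) = MvPowerSeries.coeff an.1 (1 : FF) from rfl,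
          MvPowerSeries.coeff_one, if_neg h1]]
      rw [MvPolynomial.coeff_zero, zero_smul]
    · intro h
      exact absurd (by rw [Finset.HasAntidiagonal.mem_antidiagonal, zero_add]) h
  · -- coassociativity
    intro S
    funext m
    apply MvPolynomial.ext
    intro d
    have hL : MvPolynomial.coeff d ((ρhat (ρH S)) m)
        = ∑ p ∈ Finset.HasAntidiagonal.antidiagonal m, ∑ q ∈ Finset.HasAntidiagonal.antidiagonal p.2,
            MvPolynomial.coeff d (S p.1) •
              ((MvPowerSeries.coeff q.2 (prodSer p.1 d * ∏ j, Yg j ^ (q.1 j))) ⊗ₜ[ℂ]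
                MvPowerSeries.coeff q.1 (prodSer p.1 d)) := by
      calc MvPolynomial.coeff d ((ρhat (ρH S)) m)
          = ∑ an ∈ Finset.HasAntidiagonal.antidiagonal m,
              (MvPowerSeries.coeff an.2 (prodSer an.1 d)) ⊗ₜ[ℂ]
                MvPolynomial.coeff d ((ρH S) an.1) := coeff_rhohat _ m d
        _ = ∑ an ∈ Finset.HasAntidiagonal.antidiagonal m, ∑ bk ∈ Finset.HasAntidiagonal.antidiagonal an.1,
              (MvPowerSeries.coeff an.2 (prodSer an.1 d)) ⊗ₜ[ℂ]
                (MvPolynomial.coeff d (S bk.1) •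
                  MvPowerSeries.coeff bk.2 (prodSer bk.1 d)) := by
            refine Finset.sum_congr rfl fun an _ => ?_
            rw [coeff_rhoH S an.1 d, TensorProduct.tmul_sum]
        _ = ∑ an ∈ Finset.HasAntidiagonal.antidiagonal m, ∑ bk ∈ Finset.HasAntidiagonal.antidiagonal an.1,
              MvPolynomial.coeff d (S bk.1) •
                ((MvPowerSeries.coeff an.2 (prodSer bk.1 d * ∏ j, Yg j ^ (bk.2 j))) ⊗ₜ[ℂ]
                  MvPowerSeries.coeff bk.2 (prodSer bk.1 d)) := by
            refine Finset.sum_congr rfl fun an _ => Finset.sum_congr rfl fun bk hbk => ?_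
            rw [Finset.HasAntidiagonal.mem_antidiagonal] at hbk
            rw [show prodSer an.1 d = prodSer bk.1 d * ∏ j, Yg j ^ (bk.2 j) from by
              rw [← hbk, prodSer_add_left]]
            rw [TensorProduct.tmul_smul]
        _ = ∑ p ∈ Finset.HasAntidiagonal.antidiagonal m, ∑ q ∈ Finset.HasAntidiagonal.antidiagonal p.2,
              MvPolynomial.coeff d (S p.1) •
                ((MvPowerSeries.coeff q.2 (prodSer p.1 d * ∏ j, Yg j ^ (q.1 j))) ⊗ₜ[ℂ]
                  MvPowerSeries.coeff q.1 (prodSer p.1 d)) :=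
            aux_assoc m (fun b k n =>
              MvPolynomial.coeff d (S b) •
                ((MvPowerSeries.coeff n (prodSer b d * ∏ j, Yg j ^ (k j))) ⊗ₜ[ℂ]
                  MvPowerSeries.coeff k (prodSer b d)))
    have hR : MvPolynomial.coeff d ((idΔ (ρH S)) m)
        = ∑ p ∈ Finset.HasAntidiagonal.antidiagonal m, ∑ q ∈ Finset.HasAntidiagonal.antidiagonal p.2,
            MvPolynomial.coeff d (S p.1) •
              ((MvPowerSeries.coeff q.1 (prodSer p.1 d * ∏ j, Yg j ^ (q.2 j))) ⊗ₜ[ℂ]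
                MvPowerSeries.coeff q.2 (prodSer p.1 d)) := by
      rw [show ((idΔ (ρH S)) m) = MvPolynomial.map ΔH.toRingHom ((ρH S) m) from rfl,
        MvPolynomial.coeff_map]
      simp only [AlgHom.toRingHom_eq_coe, RingHom.coe_coe]
      rw [coeff_rhoH, map_sum]
      refine Finset.sum_congr rfl fun p _ => ?_
      rw [map_smul, delta_coeff_prodSer, Finset.smul_sum]
    rw [hL, hR]
    refine Finset.sum_congr rfl fun p _ => ?_
    exact aux_sum_swap p.2 (fun x y =>
      MvPolynomial.coeff d (S p.1) •
        ((MvPowerSeries.coeff y (prodSer p.1 d * ∏ j, Yg j ^ (x j))) ⊗ₜ[ℂ]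
          MvPowerSeries.coeff x (prodSer p.1 d)))
  · -- counit
    intro S
    funext m
    apply MvPolynomial.ext
    intro d
    rw [show ((idε (ρH S)) m) = MvPolynomial.map εH.toRingHom ((ρH S) m) from rfl,
      MvPolynomial.coeff_map]
    simp only [AlgHom.toRingHom_eq_coe, RingHom.coe_coe]
    rw [coeff_rhoH, map_sum]
    have hterm : ∀ p ∈ Finset.HasAntidiagonal.antidiagonal m,
        εH (MvPolynomial.coeff d (S p.1) •
            MvPowerSeries.coeff p.2 (prodSer p.1 d))
          = MvPolynomial.coeff d (S p.1) • (if p.2 = 0 then (1 : ℂ) else 0) := by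
      intro p _
      rw [map_smul, εH_coeff_prodSer]
    rw [Finset.sum_congr rfl hterm]
    rw [Finset.sum_eq_single (m, (0 : Md5))]
    · rw [if_pos rfl, smul_eq_mul, mul_one]
    · intro an han hne
      rw [Finset.HasAntidiagonal.mem_antidiagonal] at han
      have h2 : an.2 ≠ 0 := by
        intro h
        apply hne
        have h1 : an.1 = m := by rw [← han, h, add_zero]
        exact Prod.ext h1 h
      rw [if_neg h2, smul_zero]
    · intro h
      exact absurd (by rw [Finset.HasAntidiagonal.mem_antidiagonal, add_zero]) h
end
end

section
/- With the coaction ρ : F → F ⊗ H and the ideals I ⊆ F (generated by λ_i - λ_1^{N_i - 2}, i = 2,3,4) and J ⊆ H (the Slavnov–Taylor Hopf ideal generated by components of Y_{v_i} - Y_{v_1}^{N_i-2}), one has ρ(I) ⊆ I ⊗ H + F ⊗ J. Consequently ρ descends to a coaction of the quotient Hopf algebra H/J on the quotient algebra F/I. -/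
open scoped TensorProduct
noncomputable section

/-- The ideal `I ⊆ F` generated by `λ_i - λ₁^(N_i-2)`, `i = 2,3,4`. -/
def idealIF (N : Fin 5 → ℕ) : Ideal FF :=
  Ideal.span {x | ∃ i : Fin 5, i ∈ ({1, 2, 3} : Set (Fin 5)) ∧
    x = MvPowerSeries.X i - (MvPowerSeries.X 0 : FF) ^ (N i - 2)}

/-- The Slavnov–Taylor Hopf ideal `J ⊆ H`, generated by the components of
`Y_{v_i} - Y_{v_1}^(N_i-2)`, `i = 2,3,4`. -/
def idealJH (N : Fin 5 → ℕ) : Ideal BH :=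
  Ideal.span {x | ∃ i : Fin 5, i ∈ ({1, 2, 3} : Set (Fin 5)) ∧
    ∃ n : Md5, x = MvPowerSeries.coeff n (Yg i - (Yg 0) ^ (N i - 2))}

/-- The inclusion `F → F ⊗̂ H`, `f ↦ f ⊗ 1`. -/
def ιFT : FF →+* TT :=
  MvPowerSeries.map (MvPolynomial.map (algebraMap ℂ BH))

namespace STProof

open Finset MvPowerSeries

lemma prodSer_add (a1 a2 : Md5) (d1 d2 : Fin 3 →₀ ℕ) :
    prodSer (a1 + a2) (d1 + d2) = prodSer a1 d1 * prodSer a2 d2 := by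
  unfold prodSer
  simp only [Finsupp.add_apply, pow_add, Finset.prod_mul_distrib]
  ring

lemma coeff_rho (S : FF) (m : Md5) (d : Fin 3 →₀ ℕ) :
    MvPolynomial.coeff d (ρH S m) =
      ∑ an ∈ Finset.HasAntidiagonal.antidiagonal m,
        MvPolynomial.coeff d (S an.1) • MvPowerSeries.coeff an.2 (prodSer an.1 d) := by
  unfold ρH
  rw [MvPolynomial.coeff_sum]
  refine Finset.sum_congr rfl fun an _ => ?_
  rw [MvPolynomial.coeff_sum]
  have : ∀ d' ∈ (S an.1).support,
      MvPolynomial.coeff d (MvPolynomial.coeff d' (S an.1) •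
        (MvPolynomial.monomial d' (MvPowerSeries.coeff an.2 (prodSer an.1 d')))) =
      (if d' = d then MvPolynomial.coeff d' (S an.1) •
        MvPowerSeries.coeff an.2 (prodSer an.1 d') else 0) := by
    intro d' _
    rw [MvPolynomial.coeff_smul, MvPolynomial.coeff_monomial]
    split_ifs <;> simp
  rw [Finset.sum_congr rfl this, Finset.sum_ite_eq' (MvPolynomial.support (S an.1))]
  by_cases h : d ∈ (S an.1).support
  · simp [h]
  · simp [h, MvPolynomial.notMem_support_iff.1 h]

end STProof
namespace STProof
open Finset MvPowerSeries

lemma AD4 {M : Type*} [AddCommMonoid M] (m : Md5) (f : Md5 → Md5 → Md5 → Md5 → M) :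
    (∑ p ∈ antidiagonal m, ∑ q ∈ antidiagonal p.1, ∑ r ∈ antidiagonal p.2,
      f q.1 q.2 r.1 r.2)
  = ∑ p ∈ antidiagonal m, ∑ q ∈ antidiagonal p.1, ∑ r ∈ antidiagonal p.2,
      f q.1 r.1 q.2 r.2 := by
  have h1 : ∀ (g : Md5 → Md5 → Md5 → Md5 → M),
      (∑ p ∈ antidiagonal m, ∑ q ∈ antidiagonal p.1, ∑ r ∈ antidiagonal p.2,
        g q.1 q.2 r.1 r.2)
    = ∑ x ∈ (antidiagonal m).sigma
        (fun p : Md5 × Md5 => antidiagonal p.1 ×ˢ antidiagonal p.2),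
        g x.2.1.1 x.2.1.2 x.2.2.1 x.2.2.2 := by
    intro g
    rw [Finset.sum_sigma]
    exact Finset.sum_congr rfl fun p _ =>
      (Finset.sum_product (antidiagonal p.1) (antidiagonal p.2)
        (fun s => g s.1.1 s.1.2 s.2.1 s.2.2)).symm
  rw [h1, h1 (fun a b c d => f a c b d)]
  refine Finset.sum_nbij'
    (fun x => ⟨(x.2.1.1 + x.2.2.1, x.2.1.2 + x.2.2.2), ((x.2.1.1, x.2.2.1), (x.2.1.2, x.2.2.2))⟩)
    (fun x => ⟨(x.2.1.1 + x.2.2.1, x.2.1.2 + x.2.2.2), ((x.2.1.1, x.2.2.1), (x.2.1.2, x.2.2.2))⟩)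
    ?_ ?_ ?_ ?_ ?_
  · rintro ⟨⟨a, n⟩, ⟨⟨a1, a2⟩, ⟨n1, n2⟩⟩⟩ hx
    simp only [Finset.mem_sigma, Finset.mem_product, Finset.HasAntidiagonal.mem_antidiagonal] at hx ⊢
    obtain ⟨hm, ⟨ha, hn⟩⟩ := hx
    subst ha hn hm
    exact ⟨add_add_add_comm _ _ _ _, trivial, trivial⟩
  · rintro ⟨⟨m1, m2⟩, ⟨⟨a1, n1⟩, ⟨a2, n2⟩⟩⟩ hx
    simp only [Finset.mem_sigma, Finset.mem_product, Finset.HasAntidiagonal.mem_antidiagonal] at hx ⊢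
    obtain ⟨hm, ⟨ha, hn⟩⟩ := hx
    subst ha hn hm
    exact ⟨add_add_add_comm _ _ _ _, trivial, trivial⟩
  · rintro ⟨⟨a, n⟩, ⟨⟨a1, a2⟩, ⟨n1, n2⟩⟩⟩ hx
    simp only [Finset.mem_sigma, Finset.mem_product, Finset.HasAntidiagonal.mem_antidiagonal] at hx
    obtain ⟨hm, ⟨ha, hn⟩⟩ := hx
    simp only at *
    subst ha hn
    rfl
  · rintro ⟨⟨m1, m2⟩, ⟨⟨a1, n1⟩, ⟨a2, n2⟩⟩⟩ hx
    simp only [Finset.mem_sigma, Finset.mem_product, Finset.HasAntidiagonal.mem_antidiagonal] at hx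
    obtain ⟨hm, ⟨ha, hn⟩⟩ := hx
    simp only at *
    subst ha hn
    rfl
  · rintro ⟨⟨a, n⟩, ⟨⟨a1, a2⟩, ⟨n1, n2⟩⟩⟩ _
    rfl

end STProof
namespace STProof
open Finset MvPowerSeries

lemma rho_mul (S T : FF) : ρH (S * T) = ρH S * ρH T := by
  funext m
  apply MvPolynomial.ext; intro d
  -- abbreviations
  set G : Md5 → Md5 → (Fin 3 →₀ ℕ) → BH := fun a n e =>
    MvPolynomial.coeff e (S a) • MvPowerSeries.coeff n (prodSer a e) with hG
  set G' : Md5 → Md5 → (Fin 3 →₀ ℕ) → BH := fun a n e =>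
    MvPolynomial.coeff e (T a) • MvPowerSeries.coeff n (prodSer a e) with hG'
  have hr : MvPolynomial.coeff d ((ρH S * ρH T) m)
      = ∑ p ∈ antidiagonal m, ∑ e ∈ antidiagonal d,
          ∑ q ∈ antidiagonal p.1, ∑ r ∈ antidiagonal p.2,
            G q.1 q.2 e.1 * G' r.1 r.2 e.2 := by
    have : (ρH S * ρH T) m = MvPowerSeries.coeff m (ρH S * ρH T) := rfl
    rw [this, MvPowerSeries.coeff_mul, MvPolynomial.coeff_sum]
    refine Finset.sum_congr rfl fun p _ => ?_
    rw [MvPolynomial.coeff_mul]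
    refine Finset.sum_congr rfl fun e _ => ?_
    simp only [MvPowerSeries.coeff_apply]
    rw [coeff_rho, coeff_rho, Finset.sum_mul_sum]
  have hl : MvPolynomial.coeff d (ρH (S * T) m)
      = ∑ p ∈ antidiagonal m, ∑ q ∈ antidiagonal p.1, ∑ e ∈ antidiagonal d,
          ∑ r ∈ antidiagonal p.2,
            G q.1 r.1 e.1 * G' q.2 r.2 e.2 := by
    rw [coeff_rho]
    refine Finset.sum_congr rfl fun p hp => ?_
    have h1 : (S * T) p.1 = MvPowerSeries.coeff p.1 (S * T) := rfl
    rw [h1, MvPowerSeries.coeff_mul, MvPolynomial.coeff_sum, Finset.sum_smul]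
    refine Finset.sum_congr rfl fun q hq => ?_
    rw [Finset.HasAntidiagonal.mem_antidiagonal] at hq
    rw [MvPolynomial.coeff_mul, Finset.sum_smul]
    refine Finset.sum_congr rfl fun e he => ?_
    rw [Finset.HasAntidiagonal.mem_antidiagonal] at he
    have h2 : prodSer p.1 d = prodSer q.1 e.1 * prodSer q.2 e.2 := by
      rw [← hq, ← he, prodSer_add]
    rw [h2, MvPowerSeries.coeff_mul, Finset.smul_sum]
    refine Finset.sum_congr rfl fun r _ => ?_
    simp only [hG, hG', MvPowerSeries.coeff_apply]
    rw [smul_mul_smul_comm]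
  rw [hl, hr]
  have := AD4 m (fun a1 a2 n1 n2 => ∑ e ∈ antidiagonal d, G a1 n1 e.1 * G' a2 n2 e.2)
  calc ∑ p ∈ antidiagonal m, ∑ q ∈ antidiagonal p.1, ∑ e ∈ antidiagonal d,
          ∑ r ∈ antidiagonal p.2, G q.1 r.1 e.1 * G' q.2 r.2 e.2
      = ∑ p ∈ antidiagonal m, ∑ q ∈ antidiagonal p.1, ∑ r ∈ antidiagonal p.2,
          ∑ e ∈ antidiagonal d, G q.1 r.1 e.1 * G' q.2 r.2 e.2 := by
        refine Finset.sum_congr rfl fun p _ => Finset.sum_congr rfl fun q _ => ?_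
        exact Finset.sum_comm
    _ = ∑ p ∈ antidiagonal m, ∑ q ∈ antidiagonal p.1, ∑ r ∈ antidiagonal p.2,
          ∑ e ∈ antidiagonal d, G q.1 q.2 e.1 * G' r.1 r.2 e.2 := this
    _ = ∑ p ∈ antidiagonal m, ∑ e ∈ antidiagonal d, ∑ q ∈ antidiagonal p.1,
          ∑ r ∈ antidiagonal p.2, G q.1 q.2 e.1 * G' r.1 r.2 e.2 := by
        refine Finset.sum_congr rfl fun p _ => ?_
        exact (Finset.sum_congr rfl fun q _ => Finset.sum_comm).trans Finset.sum_comm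
end STProof
namespace STProof
open Finset MvPowerSeries

lemma app_eqF (f : FF) (a : Md5) : f a = MvPowerSeries.coeff a f := rfl
lemma app_eqT (f : TT) (a : Md5) : f a = MvPowerSeries.coeff a f := rfl

lemma rho_add (S T : FF) : ρH (S + T) = ρH S + ρH T := by
  funext m
  apply MvPolynomial.ext; intro d
  have : (ρH S + ρH T) m = ρH S m + ρH T m := rfl
  rw [this, MvPolynomial.coeff_add, coeff_rho, coeff_rho, coeff_rho, ← Finset.sum_add_distrib]
  refine Finset.sum_congr rfl fun p _ => ?_
  have : (S + T) p.1 = S p.1 + T p.1 := rfl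
  rw [this, MvPolynomial.coeff_add, add_smul]

lemma rho_zero : ρH (0 : FF) = 0 := by
  funext m
  apply MvPolynomial.ext; intro d
  rw [coeff_rho]
  simp [show ∀ a : Md5, (0 : FF) a = 0 from fun _ => rfl,
    show (0 : TT) m = 0 from rfl]

lemma rho_neg (S : FF) : ρH (-S) = -ρH S := by
  have h := rho_add S (-S)
  rw [add_neg_cancel, rho_zero] at h
  exact (neg_eq_of_add_eq_zero_right h.symm).symm

lemma rho_sub (S T : FF) : ρH (S - T) = ρH S - ρH T := by
  rw [sub_eq_add_neg, sub_eq_add_neg, rho_add, rho_neg]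

lemma rho_one : ρH (1 : FF) = 1 := by
  funext m
  apply MvPolynomial.ext; intro d
  rw [coeff_rho, app_eqT 1 m, MvPowerSeries.coeff_one]
  rw [Finset.sum_eq_single ((0 : Md5), m)]
  · rw [app_eqF 1 0, MvPowerSeries.coeff_one, if_pos rfl]
    by_cases hd : d = 0
    · subst hd
      have h2 : prodSer 0 0 = 1 := by unfold prodSer; simp
      rw [h2, MvPowerSeries.coeff_one]
      by_cases hm : m = 0 <;> simp [hm, MvPolynomial.coeff_one]
    · have h1 : MvPolynomial.coeff d (1 : MvPolynomial (Fin 3) ℂ) = 0 := by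
        rw [MvPolynomial.coeff_one, if_neg (fun h => hd h.symm)]
      rw [h1, zero_smul]
      split_ifs with h
      · rw [MvPolynomial.coeff_one, if_neg (fun h => hd h.symm)]
      · simp
  · intro p hp hne
    have hp1 : p.1 ≠ 0 := by
      intro h
      apply hne
      rw [Finset.HasAntidiagonal.mem_antidiagonal, h, zero_add] at hp
      exact Prod.ext h hp
    rw [app_eqF 1 p.1, MvPowerSeries.coeff_one, if_neg hp1]
    simp
  · intro h
    exact absurd (by rw [Finset.HasAntidiagonal.mem_antidiagonal, zero_add]) h
end STProof
namespace STProof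
open Finset MvPowerSeries

def liftH : MvPowerSeries (Fin 5) BH →+* TT :=
  MvPowerSeries.map (MvPolynomial.C : BH →+* MvPolynomial (Fin 3) BH)

lemma prodSer_single (i : Fin 5) : prodSer (Finsupp.single i 1) 0 = Yg i := by
  unfold prodSer
  simp [Finsupp.single_apply, pow_ite, Finset.prod_ite_eq]

lemma rho_X (i : Fin 5) :
    ρH (MvPowerSeries.X i) = (MvPowerSeries.X i : TT) * liftH (Yg i) := by
  funext m
  apply MvPolynomial.ext; intro d
  rw [coeff_rho, app_eqT (MvPowerSeries.X i * liftH (Yg i)) m, MvPowerSeries.coeff_mul,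
    MvPolynomial.coeff_sum]
  refine Finset.sum_congr rfl fun p _ => ?_
  rw [app_eqF (MvPowerSeries.X i) p.1, MvPowerSeries.coeff_X]
  unfold liftH
  rw [MvPowerSeries.coeff_map, MvPowerSeries.coeff_X]
  by_cases h : p.1 = Finsupp.single i 1
  · rw [if_pos h, if_pos h, one_mul, MvPolynomial.coeff_one, MvPolynomial.coeff_C]
    by_cases hd : (0 : Fin 3 →₀ ℕ) = d
    · rw [if_pos hd, if_pos hd, one_smul, h, ← hd, prodSer_single]
    · rw [if_neg hd, if_neg hd, zero_smul]
  · rw [if_neg h, if_neg h, zero_mul, MvPolynomial.coeff_zero]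
    simp

lemma rho_pow (f : FF) (k : ℕ) : ρH (f ^ k) = ρH f ^ k := by
  induction k with
  | zero => simpa using rho_one
  | succ k ih => rw [pow_succ, pow_succ, rho_mul, ih]

end STProof
namespace STProof
open Finset MvPowerSeries

def idealA (N : Fin 5 → ℕ) : Ideal TT where
  carrier := {u | ∀ (m : Md5) (d : Fin 3 →₀ ℕ), MvPolynomial.coeff d (u m) ∈ idealJH N}
  add_mem' := by
    intro u v hu hv m d
    have : (u + v) m = u m + v m := rfl
    rw [this, MvPolynomial.coeff_add]
    exact add_mem (hu m d) (hv m d)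
  zero_mem' := by
    intro m d
    have : (0 : TT) m = 0 := rfl
    rw [this, MvPolynomial.coeff_zero]
    exact zero_mem _
  smul_mem' := by
    intro c u hu m d
    have : (c • u) m = MvPowerSeries.coeff m (c * u) := rfl
    rw [this, MvPowerSeries.coeff_mul, MvPolynomial.coeff_sum]
    refine Ideal.sum_mem _ fun p _ => ?_
    rw [MvPolynomial.coeff_mul]
    refine Ideal.sum_mem _ fun e _ => ?_
    exact Ideal.mul_mem_left _ _ (hu p.2 e.2)

lemma liftH_mem (N : Fin 5 → ℕ) (i : Fin 5) (hi : i ∈ ({1, 2, 3} : Set (Fin 5))) :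
    liftH (Yg i - (Yg 0) ^ (N i - 2)) ∈ idealA N := by
  intro m d
  have h1 : liftH (Yg i - (Yg 0) ^ (N i - 2)) m
      = MvPolynomial.C (MvPowerSeries.coeff m (Yg i - (Yg 0) ^ (N i - 2))) := by
    rw [app_eqT (liftH (Yg i - (Yg 0) ^ (N i - 2))) m]
    exact MvPowerSeries.coeff_map _ _ _
  rw [h1, MvPolynomial.coeff_C]
  split_ifs
  · exact Ideal.subset_span ⟨i, hi, m, rfl⟩
  · exact zero_mem _

end STProof

open STProof

/-- `ρ(I) ⊆ I ⊗ H + F ⊗ J` (inside the completed tensor product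
`F ⊗̂ H`, where `I ⊗ H` is the ideal generated by the image of `I` and `F ⊗ J`
consists of the series all of whose coefficients lie in `J`); consequently `ρ`
descends to a coaction of the quotient Hopf algebra `H/J` on `F/I`. -/
theorem coaction_preserves_ST_ideals
    (N : Fin 5 → ℕ) (hN0 : N 0 = 3) (hN1 : N 1 = 3) (hN2 : N 2 = 3) (hN3 : N 3 = 4) :
    ∀ x ∈ idealIF N, ∃ u : TT,
      (∀ (m : Md5) (d : Fin 3 →₀ ℕ), MvPolynomial.coeff d (u m) ∈ idealJH N) ∧
      ρH x - u ∈ Ideal.span (ιFT '' {y | y ∈ idealIF N}) := by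
  intro x hx
  set K : Ideal TT := Ideal.span (ιFT '' {y | y ∈ idealIF N}) with hK
  have main : ρH x ∈ idealA N ⊔ K := by
    refine Submodule.span_induction ?_ ?_ ?_ ?_ hx
    · rintro y ⟨i, hi, rfl⟩
      set e := N i - 2 with he
      have hgen : (MvPowerSeries.X i - (MvPowerSeries.X 0 : FF) ^ e) ∈ idealIF N :=
        Ideal.subset_span ⟨i, hi, rfl⟩
      have hι : ιFT (MvPowerSeries.X i - (MvPowerSeries.X 0 : FF) ^ e)
          = (MvPowerSeries.X i : TT) - (MvPowerSeries.X 0 : TT) ^ e := by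
        rw [map_sub, map_pow]
        unfold ιFT
        rw [MvPowerSeries.map_X, MvPowerSeries.map_X]
      have key : ρH (MvPowerSeries.X i - (MvPowerSeries.X 0 : FF) ^ e)
          = ιFT (MvPowerSeries.X i - (MvPowerSeries.X 0 : FF) ^ e) * liftH (Yg i)
            + (MvPowerSeries.X 0 : TT) ^ e * liftH (Yg i - (Yg 0) ^ e) := by
        rw [rho_sub, rho_X, rho_pow, rho_X, hι, map_sub, map_pow, mul_pow]
        ring
      rw [key]
      refine Submodule.add_mem _ (Submodule.mem_sup_right ?_) (Submodule.mem_sup_left ?_)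
      · exact Ideal.mul_mem_right _ _ (Ideal.subset_span ⟨_, hgen, rfl⟩)
      · exact Ideal.mul_mem_left _ _ (liftH_mem N i hi)
    · rw [rho_zero]; exact zero_mem _
    · intro y z _ _ hy hz
      rw [rho_add]; exact add_mem hy hz
    · intro a y _ hy
      rw [smul_eq_mul, rho_mul]
      exact Ideal.mul_mem_left _ _ hy
  obtain ⟨u, hu, k, hk, huk⟩ := Submodule.mem_sup.1 main
  refine ⟨u, hu, ?_⟩
  rw [← huk]
  simpa using hk
end
end

section
/- In the Hopf algebra H generated by components of the series G^{e_i} = 1 - (positive-degree terms) and G^{v_j} = 1 + (positive-degree terms) with coproduct Δ((G^r)^α) = Σ_n (G^r)^α Y_{v_1}^{n_1}···Y_{v_5}^{n_5} ⊗ p_n((G^r)^α) for all real α, the elements Y_{v_j} := G^{v_j} · Π_{i=1,2,3} (G^{e_i})^{-N_i(v_j)/2} satisfy Δ(Y_{v_j}) = Σ_n Y_{v_j} Y_{v_1}^{n_1}···Y_{v_5}^{n_5} ⊗ p_n(Y_{v_j}). -/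
open scoped TensorProduct
noncomputable section

/-- Degreewise real power of a formal series with constant term 1, via the binomial
series: `coeff_m (f^α) = Σ_k (α choose k) coeff_m ((f-1)^k)` (a finite sum in each
multidegree since `f - 1` has positive order). -/
def rpowSer (H : Type*) [CommRing H] [Algebra ℂ H] (α : ℝ)
    (f : MvPowerSeries (Fin 5) H) : MvPowerSeries (Fin 5) H :=
  fun m => ∑ᶠ k : ℕ,
    ((((∏ i ∈ Finset.range k, (α - (i : ℝ))) / (k.factorial : ℝ) : ℝ) : ℂ)) •
      MvPowerSeries.coeff m ((f - 1) ^ k)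


lemma rpowSer_one' (H : Type*) [CommRing H] [Algebra ℂ H]
    (f : MvPowerSeries (Fin 5) H) : rpowSer H 1 f = f := by
  funext m
  show (∑ᶠ k : ℕ, _) = _
  rw [finsum_eq_sum_of_support_subset _ (s := ({0, 1} : Finset ℕ)) ?_]
  · simp [Finset.sum_insert, Finset.prod_range_one, map_sub]
    rfl
  · intro k hk
    simp only [Function.mem_support] at hk
    by_contra hks
    apply hk
    have h2 : 2 ≤ k := by
      simp only [Finset.coe_insert, Finset.coe_singleton, Set.mem_insert_iff,
        Set.mem_singleton_iff] at hks
      omega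
    have : (∏ i ∈ Finset.range k, ((1 : ℝ) - (i : ℝ))) = 0 :=
      Finset.prod_eq_zero (Finset.mem_range.2 (by omega : 1 < k)) (by norm_num)
    simp [this]

open Finset in
lemma quad_antidiagonal' {A : Type*} [AddCommMonoid A] [DecidableEq A] [Finset.HasAntidiagonal A]
    {N : Type*} [AddCommMonoid N] (m : A) (F : A → A → A → A → N) :
    (∑ pq ∈ antidiagonal m, ∑ x ∈ antidiagonal pq.1, ∑ y ∈ antidiagonal pq.2,
      F x.1 x.2 y.1 y.2) =
    ∑ cd ∈ antidiagonal m, ∑ u ∈ antidiagonal cd.1, ∑ v ∈ antidiagonal cd.2,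
      F u.1 v.1 u.2 v.2 := by
  have flat : ∀ (G : A → A → A → A → N),
      (∑ pq ∈ antidiagonal m, ∑ x ∈ antidiagonal pq.1, ∑ y ∈ antidiagonal pq.2,
        G x.1 x.2 y.1 y.2) =
      ∑ z ∈ (antidiagonal m).sigma (fun pq => antidiagonal pq.1 ×ˢ antidiagonal pq.2),
        G z.2.1.1 z.2.1.2 z.2.2.1 z.2.2.2 := by
    intro G
    rw [Finset.sum_sigma]
    exact Finset.sum_congr rfl fun pq _ =>
      (Finset.sum_product (s := antidiagonal pq.1) (t := antidiagonal pq.2)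
        (f := fun z : (A × A) × (A × A) => G z.1.1 z.1.2 z.2.1 z.2.2)).symm
  rw [flat, flat (fun a b c d => F a c b d)]
  refine Finset.sum_nbij' (i := fun z => ⟨(z.2.1.1 + z.2.2.1, z.2.1.2 + z.2.2.2),
      ((z.2.1.1, z.2.2.1), (z.2.1.2, z.2.2.2))⟩)
    (j := fun z => ⟨(z.2.1.1 + z.2.2.1, z.2.1.2 + z.2.2.2),
      ((z.2.1.1, z.2.2.1), (z.2.1.2, z.2.2.2))⟩) ?_ ?_ ?_ ?_ ?_
  · rintro ⟨⟨p, q⟩, ⟨⟨p1, p2⟩, ⟨q1, q2⟩⟩⟩ hz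
    simp only [Finset.mem_sigma, Finset.mem_product, Finset.HasAntidiagonal.mem_antidiagonal] at hz ⊢
    obtain ⟨h1, h2, h3⟩ := hz
    refine ⟨?_, trivial, trivial⟩
    rw [← h1, ← h2, ← h3]
    abel
  · rintro ⟨⟨p, q⟩, ⟨⟨p1, p2⟩, ⟨q1, q2⟩⟩⟩ hz
    simp only [Finset.mem_sigma, Finset.mem_product, Finset.HasAntidiagonal.mem_antidiagonal] at hz ⊢
    obtain ⟨h1, h2, h3⟩ := hz
    refine ⟨?_, trivial, trivial⟩
    rw [← h1, ← h2, ← h3]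
    abel
  · rintro ⟨⟨p, q⟩, ⟨⟨p1, p2⟩, ⟨q1, q2⟩⟩⟩ hz
    simp only [Finset.mem_sigma, Finset.mem_product, Finset.HasAntidiagonal.mem_antidiagonal] at hz
    obtain ⟨h1, h2, h3⟩ := hz
    simp [← h2, ← h3]
  · rintro ⟨⟨p, q⟩, ⟨⟨p1, p2⟩, ⟨q1, q2⟩⟩⟩ hz
    simp only [Finset.mem_sigma, Finset.mem_product, Finset.HasAntidiagonal.mem_antidiagonal] at hz
    obtain ⟨h1, h2, h3⟩ := hz
    simp [← h2, ← h3]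
  · rintro ⟨⟨p, q⟩, ⟨⟨p1, p2⟩, ⟨q1, q2⟩⟩⟩ _
    rfl

open Finset MvPowerSeries in
/-- Multiplicativity of the coproduct formula: if `f` and `g` both satisfy the
twisted coproduct formula, then so does `f * g`. -/
lemma coprod_formula_mul
    (H : Type*) [CommRing H] [Algebra ℂ H]
    (Δ : H →ₐ[ℂ] H ⊗[ℂ] H)
    (Y : Fin 5 → MvPowerSeries (Fin 5) H)
    (f g : MvPowerSeries (Fin 5) H)
    (hf : ∀ m : Md5, Δ (coeff m f) =
      ∑ an ∈ antidiagonal m,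
        coeff an.1 (f * ∏ j', (Y j') ^ ((an.2 : Md5) j')) ⊗ₜ[ℂ] coeff an.2 f)
    (hg : ∀ m : Md5, Δ (coeff m g) =
      ∑ an ∈ antidiagonal m,
        coeff an.1 (g * ∏ j', (Y j') ^ ((an.2 : Md5) j')) ⊗ₜ[ℂ] coeff an.2 g) :
    ∀ m : Md5, Δ (coeff m (f * g)) =
      ∑ an ∈ antidiagonal m,
        coeff an.1 (f * g * ∏ j', (Y j') ^ ((an.2 : Md5) j')) ⊗ₜ[ℂ]
          coeff an.2 (f * g) := by
  intro m
  set W : Md5 → MvPowerSeries (Fin 5) H := fun n => ∏ j', (Y j') ^ (n j') with hWdef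
  have hW : ∀ a b : Md5, W (a + b) = W a * W b := by
    intro a b
    simp [hWdef, Finsupp.add_apply, pow_add, Finset.prod_mul_distrib]
  have L : Δ (coeff m (f * g)) =
      ∑ pq ∈ antidiagonal m, ∑ x ∈ antidiagonal pq.1, ∑ y ∈ antidiagonal pq.2,
        (coeff x.1 (f * W x.2) * coeff y.1 (g * W y.2)) ⊗ₜ[ℂ]
          (coeff x.2 f * coeff y.2 g) := by
    rw [MvPowerSeries.coeff_mul, map_sum]
    refine Finset.sum_congr rfl fun pq _ => ?_
    rw [map_mul, hf, hg, Finset.sum_mul_sum]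
    exact Finset.sum_congr rfl fun x _ => Finset.sum_congr rfl fun y _ =>
      Algebra.TensorProduct.tmul_mul_tmul _ _ _ _
  rw [L, quad_antidiagonal' m (fun p1 p2 q1 q2 =>
    (coeff p1 (f * W p2) * coeff q1 (g * W q2)) ⊗ₜ[ℂ] (coeff p2 f * coeff q2 g))]
  refine (Finset.sum_congr rfl fun cd hcd => ?_).symm
  have : coeff cd.2 (f * g) =
      ∑ v ∈ antidiagonal cd.2, coeff v.1 f * coeff v.2 g := MvPowerSeries.coeff_mul _ _ _
  rw [this, TensorProduct.tmul_sum]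
  rw [show (∑ v ∈ antidiagonal cd.2,
      coeff cd.1 (f * g * W cd.2) ⊗ₜ[ℂ] (coeff v.1 f * coeff v.2 g)) =
    ∑ v ∈ antidiagonal cd.2, ∑ u ∈ antidiagonal cd.1,
      (coeff u.1 (f * W v.1) * coeff u.2 (g * W v.2)) ⊗ₜ[ℂ]
        (coeff v.1 f * coeff v.2 g) from
    Finset.sum_congr rfl fun v hv => by
      have hv' : v.1 + v.2 = cd.2 := Finset.HasAntidiagonal.mem_antidiagonal.1 hv
      have hsplit : f * g * W cd.2 = (f * W v.1) * (g * W v.2) := by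
        rw [← hv', hW]; ring
      rw [hsplit, MvPowerSeries.coeff_mul, TensorProduct.sum_tmul]]
  exact Finset.sum_comm

/-- in a commutative Hopf algebra `H` containing invertible formal series
`G^{e_i}` (`i = 1,2,3`) and `G^{v_j}` (`j = 1,…,5`) of the form `1 + higher multidegree`,
whose real powers all satisfy the multiplicative coproduct formula
`Δ((G^r)^α) = Σ_n (G^r)^α Y_{v_1}^{n_1}···Y_{v_5}^{n_5} ⊗ pₙ((G^r)^α)`,
the elements `Y_{v_j} := G^{v_j} · Π_i (G^{e_i})^{-N_i(v_j)/2}` satisfy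
`Δ(Y_{v_j}) = Σ_n Y_{v_j} Y_{v_1}^{n_1}···Y_{v_5}^{n_5} ⊗ pₙ(Y_{v_j})`. -/
theorem coproduct_on_Y_elements
    (H : Type*) [CommRing H] [Algebra ℂ H]
    (Δ : H →ₐ[ℂ] H ⊗[ℂ] H)
    (Ge : Fin 3 → MvPowerSeries (Fin 5) H) (Gv : Fin 5 → MvPowerSeries (Fin 5) H)
    (hGe : ∀ i, MvPowerSeries.constantCoeff (Ge i) = 1)
    (hGv : ∀ j, MvPowerSeries.constantCoeff (Gv j) = 1)
    (Nl : Fin 3 → Fin 5 → ℕ)  -- `N_i(v_j)`: number of `e_i`-lines attached to `v_j`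
    -- the elements `Y_{v_j} = G^{v_j} Π_i (G^{e_i})^{-N_i(v_j)/2}`:
    (Y : Fin 5 → MvPowerSeries (Fin 5) H)
    (hY : ∀ j, Y j = Gv j * ∏ i, rpowSer H (-((Nl i j : ℝ) / 2)) (Ge i))
    -- hypothesis: the coproduct formula for all real powers of all `G^r`:
    (hΔ : ∀ G ∈ Set.range Ge ∪ Set.range Gv, ∀ (α : ℝ) (m : Md5),
      Δ (MvPowerSeries.coeff m (rpowSer H α G)) =
        ∑ an ∈ Finset.HasAntidiagonal.antidiagonal m,
          MvPowerSeries.coeff an.1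
              (rpowSer H α G * ∏ j, (Y j) ^ ((an.2 : Md5) j)) ⊗ₜ[ℂ]
            MvPowerSeries.coeff an.2 (rpowSer H α G)) :
    ∀ (j : Fin 5) (m : Md5),
      Δ (MvPowerSeries.coeff m (Y j)) =
        ∑ an ∈ Finset.HasAntidiagonal.antidiagonal m,
          MvPowerSeries.coeff an.1 (Y j * ∏ j', (Y j') ^ ((an.2 : Md5) j')) ⊗ₜ[ℂ]
            MvPowerSeries.coeff an.2 (Y j) := by
  intro j m
  have hPGe : ∀ (i : Fin 3) (α : ℝ), ∀ m' : Md5,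
      Δ (MvPowerSeries.coeff m' (rpowSer H α (Ge i))) =
        ∑ an ∈ Finset.HasAntidiagonal.antidiagonal m',
          MvPowerSeries.coeff an.1
              (rpowSer H α (Ge i) * ∏ j', (Y j') ^ ((an.2 : Md5) j')) ⊗ₜ[ℂ]
            MvPowerSeries.coeff an.2 (rpowSer H α (Ge i)) :=
    fun i α => hΔ (Ge i) (Or.inl ⟨i, rfl⟩) α
  have hPGv : ∀ m' : Md5,
      Δ (MvPowerSeries.coeff m' (Gv j)) =
        ∑ an ∈ Finset.HasAntidiagonal.antidiagonal m',
          MvPowerSeries.coeff an.1 (Gv j * ∏ j', (Y j') ^ ((an.2 : Md5) j')) ⊗ₜ[ℂ]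
            MvPowerSeries.coeff an.2 (Gv j) := by
    have h := hΔ (Gv j) (Or.inr ⟨j, rfl⟩) 1
    rwa [rpowSer_one'] at h
  have hprod : Y j = Gv j *
      (rpowSer H (-((Nl 0 j : ℝ) / 2)) (Ge 0) * rpowSer H (-((Nl 1 j : ℝ) / 2)) (Ge 1) *
        rpowSer H (-((Nl 2 j : ℝ) / 2)) (Ge 2)) := by
    rw [hY j, Fin.prod_univ_three]
  rw [hprod]
  exact coprod_formula_mul H Δ Y _ _ hPGv
    (coprod_formula_mul H Δ Y _ _
      (coprod_formula_mul H Δ Y _ _ (hPGe 0 _) (hPGe 1 _)) (hPGe 2 _)) m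
end
end
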